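/- arXiv:1901.04152 — 5 statements merged into one kernel-verified Lean document; each statement's English description precedes it below -/
import Mathlib

section
/- Let n ≥ 1, let A ⊆ ℂ^n be any set, and define ρ : ℂ^n → ℝ by ρ(z) = ‖z₁‖ (the absolute value of the first coordinate). Then ∫⁻_{r ∈ ℝ} μH^1 (A ∩ ρ⁻¹{r}) dr ≤ μH^2(A), where the integral is the lower Lebesgue integral over r ∈ ℝ with respect to Lebesgue measure, and μH^1, μH^2 denote Hausdorff measures on ℂ^n with its standard (Euclidean) metric. -/
open MeasureTheory Set EMetric Filter
open scoped ENNReal Topology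

private lemma rho_lipschitz (n : ℕ) (i : Fin n) :
    LipschitzWith 1 (fun z : EuclideanSpace ℂ (Fin n) => ‖z i‖) := by
  have h1 : LipschitzWith 1 (fun z : EuclideanSpace ℂ (Fin n) => z i) := by
    intro x y
    rw [ENNReal.coe_one, one_mul, edist_nndist, edist_nndist, ENNReal.coe_le_coe,
      ← NNReal.coe_le_coe, coe_nndist, coe_nndist, EuclideanSpace.dist_eq]
    have : dist (x i) (y i) = Real.sqrt (dist (x i) (y i) ^ 2) := by
      rw [Real.sqrt_sq dist_nonneg]
    rw [this]
    apply Real.sqrt_le_sqrt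
    exact Finset.single_le_sum (f := fun j => dist (x j) (y j) ^ 2)
      (fun j _ => sq_nonneg _) (Finset.mem_univ i)
  have h2 := lipschitzWith_one_norm.comp h1; rw [mul_one] at h2; exact h2

/-- Slicing inequality derived from the Eilenberg inequality: slices of a set
`A ⊆ ℂⁿ` by level sets of `ρ(z) = ‖z₁‖` satisfy
`∫⁻ μH¹(A ∩ ρ⁻¹{r}) dr ≤ μH²(A)`. -/
theorem slice_measure_bound (n : ℕ) (hn : 0 < n)
    [MeasurableSpace (EuclideanSpace ℂ (Fin n))]
    [BorelSpace (EuclideanSpace ℂ (Fin n))]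
    (A : Set (EuclideanSpace ℂ (Fin n))) :
    ∫⁻ r : ℝ, μH[1] (A ∩ (fun z : EuclideanSpace ℂ (Fin n) => ‖z ⟨0, hn⟩‖) ⁻¹' {r})
      ≤ μH[2] A := by
  set ρ : EuclideanSpace ℂ (Fin n) → ℝ := fun z => ‖z ⟨0, hn⟩‖ with hρdef
  have hρ : LipschitzWith 1 ρ := rho_lipschitz n ⟨0, hn⟩
  rcases eq_top_or_lt_top (μH[2] A) with htop | hfin
  · rw [htop]; exact le_top
  -- it suffices to prove the bound with an extra ε
  refine ENNReal.le_of_forall_pos_le_add fun ε hε hA ↦ ?_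
  classical
  -- Step 1: choose covers of A at scale 1/(k+1) with controlled sum of diam²
  have hcov : ∀ k : ℕ, ∃ t : ℕ → Set (EuclideanSpace ℂ (Fin n)), A ⊆ ⋃ m, t m ∧
      (∀ m, diam (t m) ≤ ((k : ℝ≥0∞) + 1)⁻¹) ∧
      ∑' m, diam (t m) ^ (2 : ℝ) ≤ μH[2] A + ε := by
    intro k
    have hlt : (⨅ (t : ℕ → Set (EuclideanSpace ℂ (Fin n))) (_ : A ⊆ ⋃ m, t m)
        (_ : ∀ m, diam (t m) ≤ ((k : ℝ≥0∞) + 1)⁻¹),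
        ∑' m, ⨆ _ : (t m).Nonempty, diam (t m) ^ (2 : ℝ)) < μH[2] A + ε := by
      refine lt_of_le_of_lt ?_ (ENNReal.lt_add_right hfin.ne (by exact_mod_cast hε.ne'))
      rw [Measure.hausdorffMeasure_apply]
      refine le_iSup₂_of_le ((k : ℝ≥0∞) + 1)⁻¹ (by simp [ENNReal.inv_pos]
        ) le_rfl
    simp only [iInf_lt_iff] at hlt
    obtain ⟨t, ht1, ht2, ht3⟩ := hlt
    refine ⟨t, ht1, ht2, le_trans ?_ ht3.le⟩
    refine Summable.tsum_le_tsum (fun m => ?_) ENNReal.summable ENNReal.summable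
    rcases eq_empty_or_nonempty (t m) with h | h
    · simp [h, ENNReal.rpow_two, EMetric.diam]
    · simp [h]
  choose t ht_cov ht_diam ht_sum using hcov
  -- the comparison functions
  set g : ℕ → ℝ → ℝ≥0∞ := fun k r =>
    ∑' m, (closure (ρ '' t k m)).indicator (fun _ => diam (t k m)) r with hg
  have hgmeas : ∀ k, Measurable (g k) := by
    intro k
    exact Measurable.ennreal_tsum fun m =>
      measurable_const.indicator isClosed_closure.measurableSet
  -- Step 2: pointwise bound by the liminf
  have hpt : ∀ r : ℝ, μH[1] (A ∩ ρ ⁻¹' {r}) ≤ Filter.liminf (fun k => g k r) atTop := by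
    intro r
    rw [Measure.hausdorffMeasure_apply]
    refine iSup₂_le fun δ hδ => ?_
    refine Filter.le_liminf_of_le (by isBoundedDefault) ?_
    have hev : ∀ᶠ k : ℕ in atTop, ((k : ℝ≥0∞) + 1)⁻¹ ≤ δ := by
      have : Tendsto (fun k : ℕ => ((k : ℝ≥0∞) + 1)⁻¹) atTop (𝓝 0) :=
        ENNReal.tendsto_inv_nat_nhds_zero.comp (tendsto_add_atTop_nat 1) |>.congr
          (fun k => by simp [add_comm])
      exact this.eventually_le_const hδ
    refine hev.mono fun k hk => ?_
    -- use the cover `t k`, restricted to sets meeting the slice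
    set S := A ∩ ρ ⁻¹' {r}
    set s : ℕ → Set (EuclideanSpace ℂ (Fin n)) := fun m => if (t k m ∩ S).Nonempty then t k m else ∅ with hs
    have hcov' : S ⊆ ⋃ m, s m := by
      intro x hx
      obtain ⟨m, hm⟩ := mem_iUnion.1 (ht_cov k hx.1)
      have hne : (t k m ∩ S).Nonempty := ⟨x, hm, hx⟩
      exact mem_iUnion.2 ⟨m, by simp [hs, hne, hm]⟩
    have hdiam : ∀ m, diam (s m) ≤ δ := by
      intro m
      rcases eq_or_ne (s m) ∅ with h | h
      · simp [h, EMetric.diam]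
      · have : s m = t k m := by by_contra h'; simp only [hs] at h h'; aesop
        rw [this]; exact (ht_diam k m).trans hk
    refine le_trans
      (iInf₂_le_of_le s hcov' (iInf_le_of_le hdiam
        (le_refl (∑' m, ⨆ _ : (s m).Nonempty, diam (s m) ^ (1:ℝ))))) ?_
    refine Summable.tsum_le_tsum (fun m => ?_) ENNReal.summable ENNReal.summable
    rcases eq_empty_or_nonempty (t k m ∩ S) with h | h
    · simp [hs, h]
    · obtain ⟨x, hx1, hx2⟩ := h
      have hr : r ∈ closure (ρ '' t k m) :=
        subset_closure ⟨x, hx1, hx2.2⟩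
      have hne : (t k m ∩ S).Nonempty := ⟨x, hx1, hx2⟩
      have hsm : s m = t k m := by simp [hs, hne]
      rw [hsm, Set.indicator_of_mem hr]
      refine iSup_le fun _ => by rw [ENNReal.rpow_one]
  -- Step 3: integral bound for each g k
  have hint : ∀ k, ∫⁻ r, g k r ≤ μH[2] A + ε := by
    intro k
    rw [hg]
    rw [lintegral_tsum fun m =>
      (measurable_const.indicator isClosed_closure.measurableSet).aemeasurable]
    refine le_trans (Summable.tsum_le_tsum (fun m => ?_) ENNReal.summable ENNReal.summable)
      (ht_sum k)
    rw [lintegral_indicator_const isClosed_closure.measurableSet]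
    calc diam (t k m) * volume (closure (ρ '' t k m))
        ≤ diam (t k m) * diam (closure (ρ '' t k m)) :=
          mul_le_mul_right (Real.volume_le_diam _) _
      _ ≤ diam (t k m) * diam (t k m) := by
          simp only [EMetric.diam]; rw [Metric.ediam_closure]
          exact mul_le_mul_right (by simpa using hρ.ediam_image_le (t k m)) _
      _ = diam (t k m) ^ (2 : ℝ) := by rw [ENNReal.rpow_two, sq]
  -- put it together with Fatou
  calc ∫⁻ r : ℝ, μH[1] (A ∩ ρ ⁻¹' {r})
      ≤ ∫⁻ r, Filter.liminf (fun k => g k r) atTop := lintegral_mono hpt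
    _ ≤ Filter.liminf (fun k => ∫⁻ r, g k r) atTop :=
        lintegral_liminf_le fun k => hgmeas k
    _ ≤ μH[2] A + ε := by
        refine Filter.liminf_le_of_frequently_le (Frequently.of_forall hint)
          (by isBoundedDefault)
end

section
/- Let n ≥ 1 and let K ⊆ ℂ^n be a set with μH^1(K) < ∞. Let π : ℂ^n → ℂ be the projection to the first coordinate, π(z) = z₁. If μH^1(π(K)) > 0, then there exist a positive integer s and a subset Q ⊆ π(K) with μH^1(Q) > 0 such that for every y ∈ Q the fiber K ∩ π⁻¹{y} is finite and has exactly s elements. -/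
open MeasureTheory Set
open scoped ENNReal

/-- Eilenberg-type bound: if every point of `A` has at least `m` preimage points in `K`
that are pairwise more than `δ` apart, then `m * μH¹(A) ≤ μH¹(K)`. -/
private lemma aux_card_bound {X Y : Type*} [MetricSpace X] [MeasurableSpace X] [BorelSpace X]
    [TopologicalSpace.SeparableSpace X] [Nonempty X]
    [MetricSpace Y] [MeasurableSpace Y] [BorelSpace Y]
    (π : X → Y) (hlip : LipschitzWith 1 π) (K : Set X) (m : ℕ) {δ : ℝ} (hδ : 0 < δ) :
    (m : ℝ≥0∞) * μH[1] {y : Y | ∃ f : Fin m → X, (∀ j, f j ∈ K) ∧ (∀ j, π (f j) = y) ∧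
      (∀ j k, j ≠ k → δ < dist (f j) (f k))} ≤ μH[1] K := by
  classical
  set A := {y : Y | ∃ f : Fin m → X, (∀ j, f j ∈ K) ∧ (∀ j, π (f j) = y) ∧
      (∀ j k, j ≠ k → δ < dist (f j) (f k))} with hA
  -- countable Borel partition-ish cover of X by cells of diameter < δ
  set u : ℕ → X := TopologicalSpace.denseSeq X with hu
  have hdense : DenseRange u := TopologicalSpace.denseRange_denseSeq X
  set c : ℕ → Set X := fun i => Metric.ball (u i) (δ/2) \ ⋃ j < i, Metric.ball (u j) (δ/2)
    with hc
  have hcmeas : ∀ i, MeasurableSet (c i) := fun i =>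
    (Metric.isOpen_ball.measurableSet).diff
      (MeasurableSet.biUnion (Set.to_countable _) fun j _ => Metric.isOpen_ball.measurableSet)
  have hcball : ∀ i, c i ⊆ Metric.ball (u i) (δ/2) := fun i => diff_subset
  have hcdisj : Pairwise (Function.onFun Disjoint c) := by
    intro i j hij
    rcases hij.lt_or_gt with h | h
    · exact Set.disjoint_left.2 fun x hxi hxj =>
        hxj.2 (mem_biUnion h (hcball i hxi))
    · exact Set.disjoint_left.2 fun x hxi hxj =>
        hxi.2 (mem_biUnion h (hcball j hxj))
  have hccov : ∀ x : X, ∃ i, x ∈ c i := by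
    intro x
    have hex : ∃ i, x ∈ Metric.ball (u i) (δ/2) := by
      obtain ⟨i, hi⟩ := hdense.exists_dist_lt x (by positivity : (0:ℝ) < δ/2)
      exact ⟨i, by simpa [Metric.mem_ball, dist_comm] using hi⟩
    refine ⟨Nat.find hex, Nat.find_spec hex, ?_⟩
    intro hmem
    obtain ⟨j, hj, hxj⟩ := mem_iUnion₂.1 hmem
    exact Nat.find_min hex hj hxj
  have hcdiam : ∀ i, ∀ p ∈ c i, ∀ q ∈ c i, dist p q < δ := by
    intro i p hp q hq
    have h1 := Metric.mem_ball.1 (hcball i hp)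
    have h2 := Metric.mem_ball.1 (hcball i hq)
    calc dist p q ≤ dist p (u i) + dist (u i) q := dist_triangle _ _ _
      _ < δ/2 + δ/2 := by rw [dist_comm (u i) q]; exact add_lt_add h1 h2
      _ = δ := by ring
  set V : ℕ → Set Y := fun i => π '' (K ∩ c i) with hV
  set W : ℕ → Set Y := fun i => toMeasurable (μH[1] : Measure Y) (V i) with hW
  have hWmeas : ∀ i, MeasurableSet (W i) := fun i => measurableSet_toMeasurable _ _
  set g : Y → ℝ≥0∞ := fun y => ∑' i, (W i).indicator (1 : Y → ℝ≥0∞) y with hg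
  have hgmeas : Measurable g :=
    Measurable.ennreal_tsum fun i => measurable_const.indicator (hWmeas i)
  have hge : A ⊆ {y | (m : ℝ≥0∞) ≤ g y} := by
    intro y hy
    obtain ⟨f, hfK, hfy, hfd⟩ := hy
    choose ι hι using fun j => hccov (f j)
    have hινj : Function.Injective ι := by
      intro j k hjk
      by_contra hne
      have := hfd j k hne
      have := hcdiam (ι j) (f j) (hι j) (f k) (hjk ▸ hι k)
      linarith
    have hyW : ∀ j, y ∈ W (ι j) := by
      intro j
      refine subset_toMeasurable _ _ ⟨f j, ⟨hfK j, hι j⟩, hfy j⟩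
    have h1 : ∀ i ∈ Finset.univ.image ι, (W i).indicator (1 : Y → ℝ≥0∞) y = 1 := by
      intro i hi
      obtain ⟨j, -, rfl⟩ := Finset.mem_image.1 hi
      simp [Set.indicator_of_mem (hyW j)]
    have hsum : ∑ i ∈ Finset.univ.image ι, (W i).indicator (1 : Y → ℝ≥0∞) y = m := by
      rw [Finset.sum_congr rfl h1, Finset.sum_const, Finset.card_image_of_injective _ hινj]
      simp
    rw [Set.mem_setOf_eq, ← hsum]
    exact ENNReal.sum_le_tsum _
  calc (m : ℝ≥0∞) * μH[1] A ≤ (m : ℝ≥0∞) * μH[1] {y | (m : ℝ≥0∞) ≤ g y} := by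
        exact mul_le_mul_right (measure_mono hge) _
    _ ≤ ∫⁻ y, g y ∂(μH[1] : Measure Y) := mul_meas_ge_le_lintegral₀ hgmeas.aemeasurable _
    _ = ∑' i, μH[1] (W i) := by
        rw [hg, lintegral_tsum (f := fun i => (W i).indicator (1 : Y → ℝ≥0∞))
          fun i => (measurable_const.indicator (hWmeas i)).aemeasurable]
        exact tsum_congr fun i => lintegral_indicator_one (hWmeas i)
    _ = ∑' i, μH[1] (V i) := by simp_rw [hW, measure_toMeasurable]
    _ ≤ ∑' i, μH[1] (K ∩ c i) := by
        refine ENNReal.tsum_le_tsum fun i => ?_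
        simpa using hlip.hausdorffMeasure_image_le (by norm_num) (K ∩ c i)
    _ ≤ μH[1] K := by
        calc ∑' i, μH[1] (K ∩ c i)
            ≤ ∑' i, μH[1] (toMeasurable (μH[1] : Measure X) K ∩ c i) := by
              refine ENNReal.tsum_le_tsum fun i => measure_mono ?_
              exact inter_subset_inter_left _ (subset_toMeasurable _ _)
          _ = μH[1] (⋃ i, toMeasurable (μH[1] : Measure X) K ∩ c i) := by
              refine (measure_iUnion ?_ fun i => (measurableSet_toMeasurable _ _).inter (hcmeas i)).symm
              exact fun i j hij => (hcdisj hij).mono inter_subset_right inter_subset_right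
          _ ≤ μH[1] (toMeasurable (μH[1] : Measure X) K) := measure_mono (iUnion_subset fun i => inter_subset_left)
          _ = μH[1] K := measure_toMeasurable _

/-- If `K ⊆ ℂⁿ` has finite `H¹` measure and its projection to the first
coordinate has positive `H¹` measure, then some fiber cardinality `s` is
attained over a set of positive linear measure. -/
theorem fiber_cardinality_positive_measure (n : ℕ) (hn : 0 < n)
    [MeasurableSpace (EuclideanSpace ℂ (Fin n))]
    [BorelSpace (EuclideanSpace ℂ (Fin n))]
    (K : Set (EuclideanSpace ℂ (Fin n))) (hK : μH[1] K < ∞)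
    (π : EuclideanSpace ℂ (Fin n) → ℂ) (hπ : ∀ z, π z = z ⟨0, hn⟩)
    (hpos : 0 < μH[1] (π '' K)) :
    ∃ s : ℕ, 0 < s ∧ ∃ Q ⊆ π '' K, 0 < μH[1] Q ∧
      ∀ y ∈ Q, (K ∩ π ⁻¹' {y}).Finite ∧ (K ∩ π ⁻¹' {y}).ncard = s := by
  classical
  have hlip : LipschitzWith 1 π := by
    apply LipschitzWith.of_dist_le_mul
    intro a b
    simp only [NNReal.coe_one, one_mul]
    rw [hπ a, hπ b, EuclideanSpace.dist_eq]
    have h0 : dist (a ⟨0, hn⟩) (b ⟨0, hn⟩)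
        = Real.sqrt (dist (a ⟨0, hn⟩) (b ⟨0, hn⟩) ^ 2) := (Real.sqrt_sq dist_nonneg).symm
    rw [h0]
    apply Real.sqrt_le_sqrt
    exact Finset.single_le_sum (f := fun i => dist (a i) (b i) ^ 2)
      (fun i _ => sq_nonneg _) (Finset.mem_univ _)
  set E : Set ℂ := {y | (K ∩ π ⁻¹' {y}).Infinite} with hEdef
  have hE : μH[1] E = 0 := by
    by_contra h0
    obtain ⟨m₀, hm₀⟩ := ENNReal.exists_nat_gt (ENNReal.div_lt_top hK.ne h0).ne
    set m : ℕ := m₀ + 2 with hm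
    have hmlt : μH[1] K < (m : ℝ≥0∞) * μH[1] E := by
      have h1 : μH[1] K / μH[1] E < (m : ℝ≥0∞) :=
        hm₀.trans_le (by exact_mod_cast Nat.le_add_right m₀ 2)
      exact (ENNReal.div_lt_iff (Or.inl h0) (Or.inr hK.ne)).1 h1
    set S : ℕ → Set ℂ := fun k =>
      {y | ∃ f : Fin m → EuclideanSpace ℂ (Fin n), (∀ j, f j ∈ K) ∧ (∀ j, π (f j) = y) ∧
        (∀ j l, j ≠ l → (1 : ℝ) / (k + 1) < dist (f j) (f l))} with hS
    have hmono : Monotone S := by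
      intro k l hkl y hy
      obtain ⟨f, h1, h2, h3⟩ := hy
      refine ⟨f, h1, h2, fun j j' hne => lt_of_le_of_lt ?_ (h3 j j' hne)⟩
      apply one_div_le_one_div_of_le
      · positivity
      · exact_mod_cast by exact_mod_cast add_le_add_left (Nat.cast_le.2 hkl) (1:ℝ)
    have hES : E ⊆ ⋃ k, S k := by
      intro y hy
      obtain ⟨t, htsub, htfin, htcard⟩ := hy.exists_subset_ncard_eq m
      have hecard : htfin.toFinset.card = m := by
        rwa [Set.ncard_eq_toFinset_card _ htfin] at htcard
        
      set f : Fin m → EuclideanSpace ℂ (Fin n) :=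
        fun j => (htfin.toFinset.equivFin.symm (Fin.cast hecard.symm j) : _) with hf
      have hfinj : Function.Injective f := by
        intro j l hjl
        have := htfin.toFinset.equivFin.symm.injective (Subtype.val_injective hjl)
        simpa [Fin.ext_iff] using this
      have hft : ∀ j, f j ∈ t := fun j => by
        have hmem := (htfin.toFinset.equivFin.symm (Fin.cast hecard.symm j)).2
        exact (Set.Finite.mem_toFinset htfin).1 hmem
      have hne2 : ((Finset.univ : Finset (Fin m × Fin m)).filter
          (fun p => p.1 ≠ p.2)).Nonempty := by
        refine ⟨(⟨0, by omega⟩, ⟨1, by omega⟩), ?_⟩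
        simp [Fin.ext_iff]; omega
      obtain ⟨p0, hp0mem, hp0min⟩ := Finset.exists_min_image _
        (fun p : Fin m × Fin m => dist (f p.1) (f p.2)) hne2
      have hp0ne : p0.1 ≠ p0.2 := (Finset.mem_filter.1 hp0mem).2
      have hdpos : 0 < dist (f p0.1) (f p0.2) :=
        dist_pos.2 fun h => hp0ne (hfinj h)
      obtain ⟨k, hk⟩ := exists_nat_one_div_lt hdpos
      refine mem_iUnion.2 ⟨k, f, fun j => (htsub (hft j)).1,
        fun j => (htsub (hft j)).2, fun j l hne => lt_of_lt_of_le hk ?_⟩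
      exact hp0min (j, l) (Finset.mem_filter.2 ⟨Finset.mem_univ _, hne⟩)
    have hbound : (m : ℝ≥0∞) * μH[1] E ≤ μH[1] K := by
      calc (m : ℝ≥0∞) * μH[1] E ≤ (m : ℝ≥0∞) * μH[1] (⋃ k, S k) :=
            mul_le_mul_right (measure_mono hES) _
        _ = (m : ℝ≥0∞) * ⨆ k, μH[1] (S k) := by rw [hmono.measure_iUnion]
        _ = ⨆ k, (m : ℝ≥0∞) * μH[1] (S k) := by rw [ENNReal.mul_iSup]
        _ ≤ μH[1] K := iSup_le fun k =>
            aux_card_bound π hlip K m (by positivity : (0:ℝ) < 1 / (k + 1))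
    exact absurd hbound (not_le.2 hmlt)
  set Q : ℕ → Set ℂ := fun s =>
    {y | y ∈ π '' K ∧ (K ∩ π ⁻¹' {y}).Finite ∧ (K ∩ π ⁻¹' {y}).ncard = s} with hQ
  have hcover : π '' K ⊆ E ∪ ⋃ s : ℕ, Q s := by
    intro y hy
    by_cases hf : (K ∩ π ⁻¹' {y}).Finite
    · exact Or.inr (mem_iUnion.2 ⟨(K ∩ π ⁻¹' {y}).ncard, hy, hf, rfl⟩)
    · exact Or.inl hf
  have hex : ∃ s, μH[1] (Q s) ≠ 0 := by
    by_contra hall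
    push_neg at hall
    have h1 : μH[1] (π '' K) = 0 := by
      refine le_antisymm ?_ (zero_le)
      calc μH[1] (π '' K) ≤ μH[1] (E ∪ ⋃ s : ℕ, Q s) := measure_mono hcover
        _ ≤ μH[1] E + μH[1] (⋃ s : ℕ, Q s) := measure_union_le _ _
        _ ≤ 0 + ∑' s : ℕ, μH[1] (Q s) := by
            rw [hE]; exact add_le_add_right (measure_iUnion_le _) 0
        _ = 0 := by simp [hall]
    exact absurd h1 hpos.ne'
  obtain ⟨s, hs⟩ := hex
  have hspos : 0 < s := by
    rcases Nat.eq_zero_or_pos s with rfl | h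
    · exfalso
      apply hs
      have hempty : Q 0 = ∅ := by
        refine eq_empty_iff_forall_notMem.2 fun y hy => ?_
        obtain ⟨⟨x, hxK, hxy⟩, hfin, hcard⟩ := hy
        have := (Set.ncard_eq_zero hfin).1 hcard
        exact absurd this (Set.nonempty_iff_ne_empty.1 ⟨x, hxK, by simp [hxy]⟩)
      simp [hempty]
    · exact h
  exact ⟨s, hspos, Q s, fun y hy => hy.1, zero_lt_iff.2 hs, fun y hy => ⟨hy.2.1, hy.2.2⟩⟩
end

section
/- Let n ≥ 1, and for each j ∈ ℕ let γ_j : ℝ → ℂ^n be continuously differentiable on (0,1) and let θ_j : ℝ → ℝ be measurable on (0,1). Assume there exists R > 0 such that ‖(γ_j(t))₁‖ < R for all j and all t ∈ (0,1) (where (·)₁ denotes the first complex coordinate), and assume the total mass-type sum ∑_{j} ∫⁻_{(0,1)} |θ_j(t)| · ‖deriv (t ↦ (γ_j(t))₁) t‖ dt is finite. Then for Lebesgue-almost every α ∈ ℂ, the sum ∑_{j} ∫⁻_{(0,1)} |θ_j(t)| · ‖deriv (t ↦ (γ_j(t))₁) t‖ / ‖(γ_j(t))₁ − α‖ dt is finite.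 -/
open MeasureTheory Set
open scoped ENNReal
open Metric

-- Aux A: finiteness of ∫ 1/|β| over a closed ball in ℂ
lemma auxA (r : ℝ) :
    ∫⁻ β : ℂ in closedBall 0 r, (ENNReal.ofReal ‖β‖)⁻¹ < ∞ := by
  have h0 : (volume : Measure ℂ).restrict (closedBall 0 r) {(0 : ℂ)} = 0 :=
    le_antisymm (le_trans (Measure.restrict_le_self _) (by simp [measure_singleton])) bot_le
  have hcongr : ∫⁻ β : ℂ in closedBall 0 r, (ENNReal.ofReal ‖β‖)⁻¹
      = ∫⁻ β : ℂ in closedBall 0 r, ENNReal.ofReal (‖β‖⁻¹) := by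
    refine lintegral_congr_ae ?_
    have : ∀ᵐ β : ℂ ∂(volume.restrict (closedBall 0 r)), β ≠ 0 := by
      rw [ae_iff]; simpa using h0
    filter_upwards [this] with β hβ
    rw [ENNReal.ofReal_inv_of_pos (norm_pos_iff.mpr hβ)]
  rw [hcongr]
  rw [lintegral_eq_lintegral_meas_le (f := fun β : ℂ => ‖β‖⁻¹) _ (Filter.Eventually.of_forall fun β => by positivity)
    (measurable_norm.inv.aemeasurable)]
  have hsplit : ∫⁻ t in Ioi (0:ℝ),
      (volume.restrict (closedBall (0:ℂ) r)) {a | t ≤ ‖a‖⁻¹}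
      ≤ (∫⁻ t in Ioc (0:ℝ) 1, (volume.restrict (closedBall (0:ℂ) r)) {a | t ≤ ‖a‖⁻¹})
        + ∫⁻ t in Ioi (1:ℝ), (volume.restrict (closedBall (0:ℂ) r)) {a | t ≤ ‖a‖⁻¹} :=
    le_trans (lintegral_mono_set Ioi_subset_Ioc_union_Ioi) (lintegral_union_le _ _ _)
  refine lt_of_le_of_lt hsplit (ENNReal.add_lt_top.2 ⟨?_, ?_⟩)
  · calc ∫⁻ t in Ioc (0:ℝ) 1, (volume.restrict (closedBall (0:ℂ) r)) {a | t ≤ ‖a‖⁻¹}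
        ≤ ∫⁻ _ in Ioc (0:ℝ) 1, volume (closedBall (0:ℂ) r) := by
          refine lintegral_mono fun t => ?_
          exact le_trans (measure_mono (subset_univ _)) (by simp)
      _ = volume (closedBall (0:ℂ) r) * volume (Ioc (0:ℝ) 1) := by
          rw [lintegral_const, Measure.restrict_apply_univ]
      _ < ∞ := by
          refine ENNReal.mul_lt_top ?_ (by simp)
          rw [Complex.volume_closedBall]
          exact ENNReal.mul_lt_top (by simp [ENNReal.pow_lt_top, ENNReal.ofReal_lt_top]) ENNReal.coe_lt_top
  · have hb : ∀ t ∈ Ioi (1:ℝ), (volume.restrict (closedBall (0:ℂ) r)) {a | t ≤ ‖a‖⁻¹}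
        ≤ ENNReal.ofReal (t ^ (-2 : ℝ)) * NNReal.pi := by
      intro t ht
      have ht0 : (0:ℝ) < t := lt_trans one_pos ht
      have hsub : {a : ℂ | t ≤ ‖a‖⁻¹} ⊆ closedBall 0 t⁻¹ := by
        intro a ha
        simp only [mem_setOf_eq] at ha
        rcases eq_or_ne a 0 with rfl | h
        · simp [inv_nonneg.mpr ht0.le]
        · have hna : (0:ℝ) < ‖a‖ := norm_pos_iff.mpr h
          rw [mem_closedBall_zero_iff]
          rw [le_inv_comm₀ ht0 hna] at ha
          exact ha
      calc (volume.restrict (closedBall (0:ℂ) r)) {a | t ≤ ‖a‖⁻¹}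
          ≤ volume (closedBall (0:ℂ) t⁻¹) :=
            le_trans (Measure.restrict_le_self _) (measure_mono hsub)
        _ = ENNReal.ofReal t⁻¹ ^ 2 * NNReal.pi := Complex.volume_closedBall 0 t⁻¹
        _ = ENNReal.ofReal (t ^ (-2:ℝ)) * NNReal.pi := by
            rw [← ENNReal.ofReal_pow (by positivity)]
            congr 1
            rw [Real.rpow_neg ht0.le, Real.rpow_two]
            ring_nf
    calc ∫⁻ t in Ioi (1:ℝ), (volume.restrict (closedBall (0:ℂ) r)) {a | t ≤ ‖a‖⁻¹}
        ≤ ∫⁻ t in Ioi (1:ℝ), ENNReal.ofReal (t ^ (-2:ℝ)) * NNReal.pi :=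
          setLIntegral_mono' measurableSet_Ioi hb
      _ = (∫⁻ t in Ioi (1:ℝ), ENNReal.ofReal (t ^ (-2:ℝ))) * NNReal.pi :=
          lintegral_mul_const' _ _ ENNReal.coe_ne_top
      _ < ∞ := by
          refine ENNReal.mul_lt_top ?_ ENNReal.coe_lt_top
          exact ((integrableOn_Ioi_rpow_of_lt (by norm_num) one_pos)).setLIntegral_lt_top

-- Aux B: translation invariance
lemma auxB (z : ℂ) (s : ℝ) :
    ∫⁻ α : ℂ in closedBall z s, (ENNReal.ofReal ‖z - α‖)⁻¹
      = ∫⁻ β : ℂ in closedBall 0 s, (ENNReal.ofReal ‖β‖)⁻¹ := by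
  have hmp : MeasurePreserving (fun x : ℂ => x + z) volume volume :=
    measurePreserving_add_right volume z
  have hemb : MeasurableEmbedding (fun x : ℂ => x + z) :=
    (MeasurableEquiv.addRight z).measurableEmbedding
  have := hmp.setLIntegral_comp_preimage_emb hemb
    (fun α => (ENNReal.ofReal ‖z - α‖)⁻¹) (closedBall z s)
  have hpre : (fun x : ℂ => x + z) ⁻¹' closedBall z s = closedBall 0 s := by
    ext x; simp [mem_closedBall, dist_eq_norm]
  rw [hpre] at this
  rw [← this]
  refine lintegral_congr fun β => ?_
  congr 2
  rw [show z - (β + z) = -β by ring, norm_neg]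

-- Aux C: uniform inner bound
lemma auxC {R : ℝ} (hR : 0 < R) {z : ℂ} (hz : ‖z‖ ≤ R) :
    ∫⁻ α : ℂ in closedBall 0 (R + 1), (ENNReal.ofReal ‖z - α‖)⁻¹
      ≤ ∫⁻ β : ℂ in closedBall 0 (2 * R + 1), (ENNReal.ofReal ‖β‖)⁻¹ := by
  rw [← auxB z (2 * R + 1)]
  refine lintegral_mono_set fun α hα => ?_
  simp only [mem_closedBall, dist_eq_norm, sub_zero] at hα ⊢
  calc ‖α - z‖ ≤ ‖α‖ + ‖z‖ := norm_sub_le _ _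
    _ ≤ (R + 1) + R := add_le_add hα hz
    _ = 2 * R + 1 := by ring

/-- Finiteness of the Cauchy transform (the paper's Lemma 2.11), stated
parametrically for countably many weighted `C¹` curves in `ℂⁿ`. -/
theorem cauchy_transform_finite_ae (n : ℕ) (hn : 0 < n)
    (γ : ℕ → ℝ → EuclideanSpace ℂ (Fin n)) (θ : ℕ → ℝ → ℝ)
    (hγ : ∀ j, ContDiffOn ℝ 1 (γ j) (Ioo (0 : ℝ) 1))
    (hθ : ∀ j, AEMeasurable (θ j) (volume.restrict (Ioo (0 : ℝ) 1)))
    (R : ℝ) (hR : 0 < R)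
    (hbdd : ∀ j, ∀ t ∈ Ioo (0 : ℝ) 1, ‖γ j t ⟨0, hn⟩‖ < R)
    (hmass : ∑' j, ∫⁻ t in Ioo (0 : ℝ) 1,
        ENNReal.ofReal (|θ j t| * ‖deriv (fun s => γ j s ⟨0, hn⟩) t‖) < ∞) :
    ∀ᵐ α : ℂ, ∑' j, ∫⁻ t in Ioo (0 : ℝ) 1,
        ENNReal.ofReal (|θ j t| * ‖deriv (fun s => γ j s ⟨0, hn⟩) t‖) /
          ENNReal.ofReal ‖γ j t ⟨0, hn⟩ - α‖ < ∞ := by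
  set i : Fin n := ⟨0, hn⟩ with hidef
  set μ := volume.restrict (Ioo (0 : ℝ) 1) with hμdef
  -- measurable representatives
  have hgae : ∀ j, AEMeasurable (fun t => γ j t i) μ := fun j =>
    ((EuclideanSpace.proj i : EuclideanSpace ℂ (Fin n) →L[ℂ] ℂ).continuous.comp_continuousOn
      (hγ j).continuousOn).aemeasurable measurableSet_Ioo
  set g : ℕ → ℝ → ℂ := fun j => (hgae j).mk _ with hgdef
  have hgm : ∀ j, Measurable (g j) := fun j => (hgae j).measurable_mk
  have hge : ∀ j, ∀ᵐ t ∂μ, γ j t i = g j t := fun j => (hgae j).ae_eq_mk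
  set w : ℕ → ℝ → ℝ≥0∞ := fun j t =>
    ENNReal.ofReal (|(hθ j).mk _ t| * ‖deriv (fun s => γ j s i) t‖) with hwdef
  have hwm : ∀ j, Measurable (w j) := fun j =>
    (((hθ j).measurable_mk.abs).mul (measurable_deriv _).norm).ennreal_ofReal
  have hwe : ∀ j, ∀ᵐ t ∂μ,
      ENNReal.ofReal (|θ j t| * ‖deriv (fun s => γ j s i) t‖) = w j t := by
    intro j
    filter_upwards [(hθ j).ae_eq_mk] with t ht
    rw [hwdef]; dsimp only; rw [ht]
  have hgR : ∀ j, ∀ᵐ t ∂μ, ‖g j t‖ ≤ R := by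
    intro j
    filter_upwards [hge j, ae_restrict_mem measurableSet_Ioo] with t h1 h2
    rw [← h1]; exact (hbdd j t h2).le
  -- the measurable kernels
  set K : ℕ → ℂ × ℝ → ℝ≥0∞ := fun j p =>
    w j p.2 * (ENNReal.ofReal ‖g j p.2 - p.1‖)⁻¹ with hKdef
  have hKm : ∀ j, Measurable (K j) := fun j =>
    ((hwm j).comp measurable_snd).mul
      ((((hgm j).comp measurable_snd).sub measurable_fst).norm.ennreal_ofReal.inv)
  -- rewrite the goal integrals
  have heq : ∀ α : ℂ, ∀ j, (∫⁻ t in Ioo (0 : ℝ) 1,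
      ENNReal.ofReal (|θ j t| * ‖deriv (fun s => γ j s i) t‖) /
        ENNReal.ofReal ‖γ j t i - α‖) = ∫⁻ t, K j (α, t) ∂μ := by
    intro α j
    refine lintegral_congr_ae ?_
    filter_upwards [hwe j, hge j] with t h1 h2
    rw [hKdef]; dsimp only
    rw [div_eq_mul_inv, h1, h2]
  -- total mass in terms of w
  have hM : ∑' j, ∫⁻ t, w j t ∂μ < ∞ := by
    refine lt_of_le_of_lt (le_of_eq ?_) hmass
    refine tsum_congr fun j => ?_
    exact (lintegral_congr_ae ((hwe j).mono fun t ht => ht.symm))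
  -- measurability of inner integrals in α
  have mα : ∀ j, Measurable fun α : ℂ => ∫⁻ t, K j (α, t) ∂μ := fun j =>
    (hKm j).lintegral_prod_right'
  -- finiteness outside the big ball
  have hout : ∀ α : ℂ, R + 1 < ‖α‖ → ∑' j, ∫⁻ t, K j (α, t) ∂μ < ∞ := by
    intro α hα
    refine lt_of_le_of_lt (ENNReal.tsum_le_tsum fun j => ?_) hM
    refine lintegral_mono_ae ?_
    filter_upwards [hgR j] with t ht
    have h1 : (1 : ℝ) ≤ ‖g j t - α‖ := by
      have := norm_sub_norm_le α (g j t)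
      have h2 : ‖α - g j t‖ = ‖g j t - α‖ := norm_sub_rev _ _
      nlinarith [norm_sub_norm_le α (g j t)]
    have : (ENNReal.ofReal ‖g j t - α‖)⁻¹ ≤ 1 := by
      rw [ENNReal.inv_le_one]
      exact le_trans (by norm_num) (ENNReal.ofReal_le_ofReal h1)
    calc K j (α, t) ≤ w j t * 1 := mul_le_mul_right this _
      _ = w j t := mul_one _
  -- the constant
  set C : ℝ≥0∞ := ∫⁻ β : ℂ in closedBall 0 (2 * R + 1), (ENNReal.ofReal ‖β‖)⁻¹ with hCdef
  have hC : C < ∞ := auxA _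
  -- finiteness of the integral over the ball
  have hball : ∫⁻ α : ℂ in closedBall 0 (R + 1), ∑' j, ∫⁻ t, K j (α, t) ∂μ < ∞ := by
    rw [lintegral_tsum fun j => (mα j).aemeasurable]
    have hswap : ∀ j, ∫⁻ α : ℂ in closedBall 0 (R + 1), ∫⁻ t, K j (α, t) ∂μ
        = ∫⁻ t, (∫⁻ α : ℂ in closedBall 0 (R + 1), K j (α, t)) ∂μ :=
      fun j => lintegral_lintegral_swap (hKm j).aemeasurable
    calc ∑' j, ∫⁻ α : ℂ in closedBall 0 (R + 1), ∫⁻ t, K j (α, t) ∂μ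
        = ∑' j, ∫⁻ t, (∫⁻ α : ℂ in closedBall 0 (R + 1), K j (α, t)) ∂μ := by
          exact tsum_congr hswap
      _ ≤ ∑' j, ∫⁻ t, w j t * C ∂μ := by
          refine ENNReal.tsum_le_tsum fun j => lintegral_mono_ae ?_
          filter_upwards [hgR j] with t ht
          have : ∫⁻ α : ℂ in closedBall 0 (R + 1), K j (α, t)
              = w j t * ∫⁻ α : ℂ in closedBall 0 (R + 1), (ENNReal.ofReal ‖g j t - α‖)⁻¹ := by
            rw [hKdef]; dsimp only
            exact lintegral_const_mul' _ _ ENNReal.ofReal_ne_top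
          rw [this]
          exact mul_le_mul_right (auxC hR ht) _
      _ = ∑' j, (∫⁻ t, w j t ∂μ) * C := by
          refine tsum_congr fun j => ?_
          exact lintegral_mul_const' C _ hC.ne
      _ = (∑' j, ∫⁻ t, w j t ∂μ) * C := ENNReal.tsum_mul_right
      _ < ∞ := ENNReal.mul_lt_top hM hC
  -- conclude a.e. on the ball
  have haeball : ∀ᵐ α : ℂ, α ∈ closedBall (0:ℂ) (R + 1) →
      ∑' j, ∫⁻ t, K j (α, t) ∂μ < ∞ := by
    have hGm : Measurable fun α : ℂ => ∑' j, ∫⁻ t, K j (α, t) ∂μ :=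
      Measurable.ennreal_tsum mα
    have := ae_lt_top hGm hball.ne
    exact (ae_restrict_iff' measurableSet_closedBall).mp this
  filter_upwards [haeball] with α hα
  have hgoal : (∑' j, ∫⁻ t in Ioo (0 : ℝ) 1,
      ENNReal.ofReal (|θ j t| * ‖deriv (fun s => γ j s i) t‖) /
        ENNReal.ofReal ‖γ j t i - α‖) = ∑' j, ∫⁻ t, K j (α, t) ∂μ :=
    tsum_congr (heq α)
  rw [hgoal]
  by_cases hcase : ‖α‖ ≤ R + 1
  · exact hα (by simpa [mem_closedBall, dist_eq_norm] using hcase)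
  · exact hout α (lt_of_not_ge hcase)
end

section
/- Let n ≥ 1, let γ : ℝ → ℂ^n be continuously differentiable on the open interval (0,1) (ContDiffOn ℝ 1 γ (Ioo 0 1)) and injective on (0,1), and let θ : ℂ^n → ℝ be a Borel function. Then ∫⁻_{t ∈ (0,1)} |θ(γ(t))| · ‖deriv (t ↦ (γ(t))₁) t‖ dt ≤ ∫⁻_{γ((0,1))} |θ(x)| dμH^1(x), where (·)₁ denotes the first complex coordinate and the right-hand side is the lower integral of |θ| over the image γ((0,1)) with respect to the 1-dimensional Hausdorff measure on ℂ^n. -/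
open MeasureTheory Set
open scoped ENNReal


lemma piece_lemma {E : Type*} [NormedAddCommGroup E] [MeasurableSpace E] [BorelSpace E]
    (γ : ℝ → E) (A : Set ℝ) {c : ℝ} (hc : 0 < c)
    (hA : ∀ u ∈ A, ∀ v ∈ A, c * |u - v| ≤ ‖γ u - γ v‖) :
    ENNReal.ofReal c * volume A ≤ μH[1] (γ '' A) := by
  have : Nonempty ℝ := ⟨0⟩
  have hinjA : InjOn γ A := by
    intro u hu v hv huv
    by_contra hne
    have h2 : 0 < |u - v| := abs_pos.2 (sub_ne_zero.2 hne)
    have h1 := hA u hu v hv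
    rw [huv, sub_self, norm_zero] at h1
    nlinarith
  set F := Function.invFunOn γ A with hF
  have hFγ : ∀ u ∈ A, F (γ u) = u := fun u hu => hinjA.leftInvOn_invFunOn hu
  have hFle : F '' (γ '' A) = A := by
    rw [Set.image_image]
    exact (Set.image_congr (fun u hu => hFγ u hu)).trans (Set.image_id A)
  have hLip : LipschitzOnWith (Real.toNNReal c)⁻¹ F (γ '' A) := by
    rintro x ⟨u, hu, rfl⟩ y ⟨v, hv, rfl⟩
    rw [hFγ u hu, hFγ v hv, edist_dist, edist_dist, Real.dist_eq, dist_eq_norm]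
    have h2 : |u - v| ≤ c⁻¹ * ‖γ u - γ v‖ := by
      rw [le_inv_mul_iff₀ hc]; linarith [hA u hu v hv]
    calc ENNReal.ofReal |u - v| ≤ ENNReal.ofReal (c⁻¹ * ‖γ u - γ v‖) := ENNReal.ofReal_le_ofReal h2
      _ = ENNReal.ofReal c⁻¹ * ENNReal.ofReal ‖γ u - γ v‖ :=
          ENNReal.ofReal_mul (by positivity)
      _ ≤ _ := by
          apply mul_le_mul_left
          rw [ENNReal.coe_inv (by simp [hc, Real.toNNReal_pos])]
          rw [ENNReal.ofReal_inv_of_pos hc]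
          simp [ENNReal.ofReal]
  have h3 := hLip.hausdorffMeasure_image_le (zero_le_one)
  rw [hFle, ENNReal.rpow_one, MeasureTheory.hausdorffMeasure_real] at h3
  have hcne : (Real.toNNReal c : ℝ≥0∞) ≠ 0 := by simp [Real.toNNReal_pos, hc]
  have hcnetop : (Real.toNNReal c : ℝ≥0∞) ≠ ⊤ := ENNReal.coe_ne_top
  calc ENNReal.ofReal c * volume A = (Real.toNNReal c : ℝ≥0∞) * volume A := rfl
    _ ≤ (Real.toNNReal c : ℝ≥0∞) * ((Real.toNNReal c : ℝ≥0∞)⁻¹ * μH[1] (γ '' A)) := by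
        apply mul_le_mul_right
        simpa [ENNReal.coe_inv (by simp [Real.toNNReal_pos, hc] : Real.toNNReal c ≠ 0)] using h3
    _ = μH[1] (γ '' A) := by
        rw [← mul_assoc, ENNReal.mul_inv_cancel hcne hcnetop, one_mul]


lemma ball_estimate {E : Type*} [NormedAddCommGroup E] [NormedSpace ℝ E]
    [MeasurableSpace E] [BorelSpace E]
    (γ g : ℝ → E) {B : Set ℝ} (hB : Convex ℝ B) {t₀ : ℝ} {ε : ℝ} (hε : 0 < ε)
    (hd : ∀ x ∈ B, HasDerivAt γ (g x) x)
    (hosc : ∀ u ∈ B, ‖g u - g t₀‖ ≤ ε)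
    (A : Set ℝ) (hAm : MeasurableSet A) (hAB : A ⊆ B) :
    ∫⁻ u in A, ENNReal.ofReal ‖g u‖ ≤
      μH[1] (γ '' A) + ENNReal.ofReal (2 * ε) * volume A := by
  have key : ∀ u ∈ B, ∀ v ∈ B, ‖γ u - γ v - (u - v) • g t₀‖ ≤ ε * |u - v| := by
    intro u hu v hv
    have hder : ∀ x ∈ B, HasDerivWithinAt (fun x => γ x - x • g t₀) (g x - g t₀) B x := by
      intro x hx
      have h1 : HasDerivAt (fun x : ℝ => x • g t₀) (g t₀) x := by
        simpa using (hasDerivAt_id x).smul_const (g t₀)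
      exact ((hd x hx).sub h1).hasDerivWithinAt
    have := hB.norm_image_sub_le_of_norm_hasDerivWithin_le hder
      (fun x hx => hosc x hx) hv hu
    calc ‖γ u - γ v - (u - v) • g t₀‖ = ‖(γ u - u • g t₀) - (γ v - v • g t₀)‖ := by
          rw [sub_smul]; congr 1; abel
      _ ≤ ε * ‖u - v‖ := this
      _ = ε * |u - v| := by rw [Real.norm_eq_abs]
  -- pointwise upper bound
  have hub : ∀ u ∈ A, ENNReal.ofReal ‖g u‖ ≤ ENNReal.ofReal (‖g t₀‖ + ε) := by
    intro u hu
    apply ENNReal.ofReal_le_ofReal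
    calc ‖g u‖ = ‖g t₀ + (g u - g t₀)‖ := by congr 1; abel
      _ ≤ ‖g t₀‖ + ‖g u - g t₀‖ := norm_add_le _ _
      _ ≤ ‖g t₀‖ + ε := by linarith [hosc u (hAB hu)]
  have hint : ∫⁻ u in A, ENNReal.ofReal ‖g u‖ ≤ ENNReal.ofReal (‖g t₀‖ + ε) * volume A := by
    calc ∫⁻ u in A, ENNReal.ofReal ‖g u‖
        ≤ ∫⁻ _ in A, ENNReal.ofReal (‖g t₀‖ + ε) := by
          apply lintegral_mono_ae
          filter_upwards [ae_restrict_mem hAm] with u hu using hub u hu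
      _ = ENNReal.ofReal (‖g t₀‖ + ε) * volume A := by
          rw [setLIntegral_const]
  rcases le_or_gt ‖g t₀‖ ε with hle | hlt
  · refine hint.trans (le_add_left ?_)
    exact mul_le_mul_left (ENNReal.ofReal_le_ofReal (by linarith)) _
  · set c := ‖g t₀‖ - ε with hc
    have hcpos : 0 < c := by simp [hc]; linarith
    have hA : ∀ u ∈ A, ∀ v ∈ A, c * |u - v| ≤ ‖γ u - γ v‖ := by
      intro u hu v hv
      have h1 := key u (hAB hu) v (hAB hv)
      have h2 : ‖(u - v) • g t₀‖ ≤ ‖γ u - γ v‖ + ‖γ u - γ v - (u - v) • g t₀‖ := by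
        have := norm_sub_le (γ u - γ v) (γ u - γ v - (u - v) • g t₀)
        simpa [sub_sub_cancel] using this
      have h3 : ‖(u - v) • g t₀‖ = |u - v| * ‖g t₀‖ := by
        rw [norm_smul, Real.norm_eq_abs]
      nlinarith [abs_nonneg (u - v)]
    have hpiece := piece_lemma γ A hcpos hA
    calc ∫⁻ u in A, ENNReal.ofReal ‖g u‖ ≤ ENNReal.ofReal (‖g t₀‖ + ε) * volume A := hint
      _ = (ENNReal.ofReal c + ENNReal.ofReal (2 * ε)) * volume A := by
          rw [← ENNReal.ofReal_add hcpos.le (by linarith)]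
          congr 1
          rw [hc]; ring_nf
      _ = ENNReal.ofReal c * volume A + ENNReal.ofReal (2 * ε) * volume A := by
          rw [add_mul]
      _ ≤ μH[1] (γ '' A) + ENNReal.ofReal (2 * ε) * volume A := by
          exact add_le_add_left hpiece _


lemma compact_cover_estimate {E : Type*} [NormedAddCommGroup E] [NormedSpace ℝ E]
    [MeasurableSpace E] [BorelSpace E]
    (γ g : ℝ → E) {I : Set ℝ} (hinj : InjOn γ I)
    (hd : ∀ x ∈ I, HasDerivAt γ (g x) x) {ε : ℝ} (hε : 0 < ε) (δ : ℝ → ℝ)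
    (T : Finset ℝ)
    (hT : ∀ t ∈ T, Metric.ball t (δ t) ⊆ I ∧ ∀ u ∈ Metric.ball t (δ t), ‖g u - g t‖ ≤ ε) :
    ∀ K : Set ℝ, IsCompact K → K ⊆ I → K ⊆ ⋃ t ∈ T, Metric.ball t (δ t) →
      ∫⁻ u in K, ENNReal.ofReal ‖g u‖ ≤
        μH[1] (γ '' K) + ENNReal.ofReal (2 * ε) * volume K := by
  classical
  induction T using Finset.induction_on with
  | empty =>
    intro K _ _ hcov
    simp only [Finset.notMem_empty, iUnion_of_empty, iUnion_empty] at hcov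
    rw [Set.subset_empty_iff] at hcov
    simp [hcov]
  | @insert a T ha IH =>
    intro K hK hKI hcov
    have hTa : ∀ t ∈ T, Metric.ball t (δ t) ⊆ I ∧
        ∀ u ∈ Metric.ball t (δ t), ‖g u - g t‖ ≤ ε :=
      fun t ht => hT t (Finset.mem_insert_of_mem ht)
    have haT := hT a (Finset.mem_insert_self a T)
    set Ba := Metric.ball a (δ a)
    set K₂ := K \ Ba with hK₂
    set A := K ∩ Ba with hA
    have hK₂c : IsCompact K₂ := hK.diff Metric.isOpen_ball
    have hK₂I : K₂ ⊆ I := fun x hx => hKI hx.1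
    have hK₂cov : K₂ ⊆ ⋃ t ∈ T, Metric.ball t (δ t) := by
      intro x hx
      have := hcov hx.1
      simp only [Finset.mem_insert, Set.mem_iUnion] at this ⊢
      obtain ⟨t, ht, hxt⟩ := this
      rcases ht with rfl | ht
      · exact absurd hxt hx.2
      · exact ⟨t, ht, hxt⟩
    have hIH := IH hTa K₂ hK₂c hK₂I hK₂cov
    have hballA := ball_estimate γ g (convex_ball a (δ a)) hε
      (fun x hx => hd x (haT.1 hx)) haT.2 A
      (hK.measurableSet.inter measurableSet_ball) Set.inter_subset_right
    have hsplit : K = A ∪ K₂ := by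
      ext x; by_cases hx : x ∈ Ba <;> simp [hA, hK₂, hx]
    have hdisj : Disjoint A K₂ := by
      apply Set.disjoint_left.2
      rintro x ⟨_, hxB⟩ ⟨_, hxB'⟩
      exact hxB' hxB
    have hK₂m : MeasurableSet K₂ := hK₂c.measurableSet
    have himdisj : Disjoint (γ '' A) (γ '' K₂) := by
      apply Set.disjoint_image_image
      intro x hx y hy hxy
      exact (Set.disjoint_left.1 hdisj hx)
        (hinj (hKI hx.1) (hK₂I hy) hxy ▸ hy)
    have hcontK₂ : ContinuousOn γ K₂ :=
      fun x hx => ((hd x (hK₂I hx)).continuousAt).continuousWithinAt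
    have himK₂m : MeasurableSet (γ '' K₂) :=
      (hK₂c.image_of_continuousOn hcontK₂).measurableSet
    have himsplit : μH[1] (γ '' A) + μH[1] (γ '' K₂) = μH[1] (γ '' K) := by
      rw [← measure_union himdisj himK₂m, ← Set.image_union, ← hsplit]
    have hvolsplit : volume A + volume K₂ = volume K := by
      rw [← measure_union hdisj hK₂m, ← hsplit]
    have hintsplit : ∫⁻ u in K, ENNReal.ofReal ‖g u‖ =
        (∫⁻ u in A, ENNReal.ofReal ‖g u‖) + ∫⁻ u in K₂, ENNReal.ofReal ‖g u‖ := by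
      rw [hsplit, lintegral_union hK₂m hdisj]
    calc ∫⁻ u in K, ENNReal.ofReal ‖g u‖
        = (∫⁻ u in A, ENNReal.ofReal ‖g u‖) + ∫⁻ u in K₂, ENNReal.ofReal ‖g u‖ := hintsplit
      _ ≤ (μH[1] (γ '' A) + ENNReal.ofReal (2 * ε) * volume A) +
          (μH[1] (γ '' K₂) + ENNReal.ofReal (2 * ε) * volume K₂) := add_le_add hballA hIH
      _ = (μH[1] (γ '' A) + μH[1] (γ '' K₂)) +
          ENNReal.ofReal (2 * ε) * (volume A + volume K₂) := by ring
      _ = μH[1] (γ '' K) + ENNReal.ofReal (2 * ε) * volume K := by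
          rw [himsplit, hvolsplit]


-- compact case with ε
lemma compact_estimate {E : Type*} [NormedAddCommGroup E] [NormedSpace ℝ E]
    [MeasurableSpace E] [BorelSpace E]
    (γ g : ℝ → E) (hinj : InjOn γ (Ioo (0:ℝ) 1))
    (hd : ∀ x ∈ Ioo (0:ℝ) 1, HasDerivAt γ (g x) x)
    (hg : ContinuousOn g (Ioo (0:ℝ) 1))
    {ε : ℝ} (hε : 0 < ε) {K : Set ℝ} (hK : IsCompact K) (hKI : K ⊆ Ioo (0:ℝ) 1) :
    ∫⁻ u in K, ENNReal.ofReal ‖g u‖ ≤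
      μH[1] (γ '' K) + ENNReal.ofReal (2 * ε) * volume K := by
  classical
  have hI : IsOpen (Ioo (0:ℝ) 1) := isOpen_Ioo
  have hex : ∀ t ∈ K, ∃ d, 0 < d ∧ Metric.ball t d ⊆ Ioo (0:ℝ) 1 ∧
      ∀ u ∈ Metric.ball t d, ‖g u - g t‖ ≤ ε := by
    intro t ht
    have hct : ContinuousAt g t := hg.continuousAt (hI.mem_nhds (hKI ht))
    rw [Metric.continuousAt_iff] at hct
    obtain ⟨d₁, hd₁, hball₁⟩ := hct ε hε
    obtain ⟨d₂, hd₂, hball₂⟩ := Metric.isOpen_iff.1 hI t (hKI ht)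
    refine ⟨min d₁ d₂, lt_min hd₁ hd₂, ?_, ?_⟩
    · exact (Metric.ball_subset_ball (min_le_right _ _)).trans hball₂
    · intro u hu
      have : dist u t < d₁ := lt_of_lt_of_le (Metric.mem_ball.1 hu) (min_le_left _ _)
      have := hball₁ this
      rw [dist_eq_norm] at this
      exact this.le
  choose! δ hδpos hδI hδosc using hex
  have hcover : K ⊆ ⋃ t ∈ K, Metric.ball t (δ t) := fun t ht =>
    Set.mem_biUnion ht (Metric.mem_ball_self (hδpos t ht))
  obtain ⟨b, hbK, hbfin, hbcov⟩ := hK.elim_finite_subcover_image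
    (fun t _ => Metric.isOpen_ball) hcover
  refine compact_cover_estimate γ g hinj hd hε δ hbfin.toFinset ?_ K hK hKI ?_
  · intro t ht
    rw [Set.Finite.mem_toFinset] at ht
    exact ⟨hδI t (hbK ht), hδosc t (hbK ht)⟩
  · refine hbcov.trans ?_
    apply Set.iUnion₂_subset
    intro t ht
    intro x hx
    exact Set.mem_biUnion ((Set.Finite.mem_toFinset hbfin).2 ht) hx

-- core lemma
lemma core_lemma {E : Type*} [NormedAddCommGroup E] [NormedSpace ℝ E]
    [MeasurableSpace E] [BorelSpace E]
    (γ g : ℝ → E) (hinj : InjOn γ (Ioo (0:ℝ) 1))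
    (hd : ∀ x ∈ Ioo (0:ℝ) 1, HasDerivAt γ (g x) x)
    (hg : ContinuousOn g (Ioo (0:ℝ) 1)) (hgm : Measurable g)
    {s : Set ℝ} (hsm : MeasurableSet s) (hs : s ⊆ Ioo (0:ℝ) 1) :
    ∫⁻ u in s, ENNReal.ofReal ‖g u‖ ≤ μH[1] (γ '' s) := by
  have hvols : volume s ≤ 1 := by
    calc volume s ≤ volume (Ioo (0:ℝ) 1) := measure_mono hs
      _ = 1 := by simp
  have hvolfin : volume s ≠ ⊤ := (hvols.trans_lt (by norm_num)).ne
  set f : ℝ → ℝ≥0∞ := fun u => ENNReal.ofReal ‖g u‖ with hf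
  have hfm : Measurable f := (ENNReal.measurable_ofReal.comp hgm.norm)
  -- truncation
  have hsup : ∀ u, f u = ⨆ n : ℕ, min (f u) n := by
    intro u
    apply le_antisymm
    · obtain ⟨n, hn⟩ := ENNReal.exists_nat_gt (show f u ≠ ⊤ from ENNReal.ofReal_ne_top)
      exact le_iSup_of_le n (by simp [min_eq_left hn.le])
    · exact iSup_le fun n => min_le_left _ _
  have hmono : Monotone (fun (n : ℕ) (u : ℝ) => min (f u) n) := by
    intro m n hmn u
    exact min_le_min le_rfl (by exact_mod_cast Nat.cast_le.2 hmn)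
  have hstep : ∫⁻ u in s, f u = ⨆ n : ℕ, ∫⁻ u in s, min (f u) n := by
    rw [← lintegral_iSup (fun n => hfm.min measurable_const) hmono]
    congr 1; ext u; exact hsup u
  rw [hstep]
  refine iSup_le fun n => ?_
  -- fixed truncation level n
  refine ENNReal.le_of_forall_pos_le_add fun δ' hδ' _ => ?_
  set η : ℝ≥0∞ := (δ' : ℝ≥0∞) / 2 / (n + 1) with hη
  have hn1top : ((n : ℝ≥0∞) + 1) ≠ ⊤ := by
    exact ENNReal.add_ne_top.2 ⟨ENNReal.natCast_ne_top n, ENNReal.one_ne_top⟩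
  have hηpos : η ≠ 0 := by
    rw [hη, Ne, ENNReal.div_eq_zero_iff, ENNReal.div_eq_zero_iff]
    push_neg
    exact ⟨⟨ENNReal.coe_ne_zero.2 hδ'.ne', by norm_num⟩, hn1top⟩
  obtain ⟨K, hKs, hKc, hKlt⟩ := hsm.exists_isCompact_lt_add hvolfin (ε := η) hηpos
  have hKm : MeasurableSet K := hKc.measurableSet
  have hdiffvol : volume (s \ K) < η := measure_diff_lt_of_lt_add hKm.nullMeasurableSet hKs
    (((measure_mono hKs).trans_lt hvolfin.lt_top).ne) hKlt
  have hKI : K ⊆ Ioo (0:ℝ) 1 := hKs.trans hs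
  set ε : ℝ := (δ' : ℝ) / 4 with hεdef
  have hεpos : (0:ℝ) < ε := by positivity
  have hcompact := compact_estimate γ g hinj hd hg hεpos hKc hKI
  have hsplit : ∫⁻ u in s, min (f u) n =
      (∫⁻ u in K, min (f u) n) + ∫⁻ u in s \ K, min (f u) n := by
    rw [← lintegral_union (hsm.diff hKm) disjoint_sdiff_right,
      Set.union_diff_cancel hKs]
  rw [hsplit]
  have h1 : ∫⁻ u in K, min (f u) n ≤ μH[1] (γ '' s) + (δ' : ℝ≥0∞) / 2 := by
    calc ∫⁻ u in K, min (f u) n ≤ ∫⁻ u in K, f u :=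
          lintegral_mono fun u => min_le_left _ _
      _ ≤ μH[1] (γ '' K) + ENNReal.ofReal (2 * ε) * volume K := hcompact
      _ ≤ μH[1] (γ '' s) + (δ' : ℝ≥0∞) / 2 := by
          refine add_le_add (measure_mono (Set.image_mono hKs)) ?_
          calc ENNReal.ofReal (2 * ε) * volume K ≤ ENNReal.ofReal (2 * ε) * 1 := by
                gcongr
                exact (measure_mono hKs).trans hvols
            _ = ENNReal.ofReal ((δ' : ℝ) / 2) := by
                rw [mul_one]; congr 1; rw [hεdef]; ring
            _ = (δ' : ℝ≥0∞) / 2 := by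
                rw [ENNReal.ofReal_div_of_pos (by norm_num), ENNReal.ofReal_coe_nnreal]
                norm_num
  have h2 : ∫⁻ u in s \ K, min (f u) n ≤ (δ' : ℝ≥0∞) / 2 := by
    calc ∫⁻ u in s \ K, min (f u) n ≤ ∫⁻ _ in s \ K, (n : ℝ≥0∞) :=
          lintegral_mono fun u => min_le_right _ _
      _ = (n : ℝ≥0∞) * volume (s \ K) := setLIntegral_const _ _
      _ ≤ (n + 1 : ℝ≥0∞) * η := mul_le_mul' le_self_add hdiffvol.le
      _ ≤ (δ' : ℝ≥0∞) / 2 := by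
          rw [hη]
          exact ENNReal.mul_div_le
  calc (∫⁻ u in K, min (f u) n) + ∫⁻ u in s \ K, min (f u) n
      ≤ (μH[1] (γ '' s) + (δ' : ℝ≥0∞) / 2) + (δ' : ℝ≥0∞) / 2 := add_le_add h1 h2
    _ = μH[1] (γ '' s) + δ' := by
        rw [add_assoc, ENNReal.add_halves]

/-- The paper's Proposition 2.9: for a `C¹`-embedded curve `γ` with weight `θ`,
`∫_γ |θ| |dz₁| ≤ M(γ ∧ θ) = ∫_γ |θ| dH¹`. -/
theorem weighted_first_coordinate_length_le_mass (n : ℕ) (hn : 0 < n)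
    [MeasurableSpace (EuclideanSpace ℂ (Fin n))]
    [BorelSpace (EuclideanSpace ℂ (Fin n))]
    (γ : ℝ → EuclideanSpace ℂ (Fin n))
    (hγ : ContDiffOn ℝ 1 γ (Ioo (0 : ℝ) 1))
    (hinj : InjOn γ (Ioo (0 : ℝ) 1))
    (θ : EuclideanSpace ℂ (Fin n) → ℝ) (hθ : Measurable θ) :
    ∫⁻ t in Ioo (0 : ℝ) 1,
        ENNReal.ofReal (|θ (γ t)| * ‖deriv (fun s => γ s ⟨0, hn⟩) t‖) ≤
      ∫⁻ x in γ '' (Ioo (0 : ℝ) 1), ENNReal.ofReal |θ x| ∂μH[1] := by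
  classical
  set I : Set ℝ := Ioo (0:ℝ) 1 with hIdef
  have hIo : IsOpen I := isOpen_Ioo
  have hIm : MeasurableSet I := measurableSet_Ioo
  have hcont : ContinuousOn γ I := hγ.continuousOn
  -- measurable modification of γ
  set γ' : ℝ → EuclideanSpace ℂ (Fin n) := fun t => if h : t ∈ I then (I.restrict γ) ⟨t, h⟩ else 0 with hγ'def
  have hγ'm : Measurable γ' :=
    Measurable.dite (hcont.restrict.measurable) measurable_const hIm
  have hEq : EqOn γ γ' I := by
    intro t ht
    simp [hγ'def, ht, Set.restrict]
  -- derivative facts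
  have hder : ∀ x ∈ I, HasDerivAt γ (deriv γ x) x := by
    intro x hx
    exact ((hγ.differentiableOn one_ne_zero).differentiableAt (hIo.mem_nhds hx)).hasDerivAt
  have hev : ∀ x ∈ I, γ' =ᶠ[nhds x] γ := fun x hx =>
    Filter.eventuallyEq_of_mem (hIo.mem_nhds hx) (fun y hy => (hEq hy).symm)
  have hder' : ∀ x ∈ I, HasDerivAt γ' (deriv γ x) x := fun x hx =>
    (hder x hx).congr_of_eventuallyEq (hev x hx)
  have hderiv_eq : ∀ x ∈ I, deriv γ' x = deriv γ x := fun x hx =>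
    (hev x hx).deriv_eq
  have hd' : ∀ x ∈ I, HasDerivAt γ' (deriv γ' x) x := fun x hx =>
    (hderiv_eq x hx).symm ▸ hder' x hx
  have hgcont : ContinuousOn (deriv γ') I :=
    (hγ.continuousOn_deriv_of_isOpen hIo le_rfl).congr hderiv_eq
  have hgm : Measurable (deriv γ') := measurable_deriv γ'
  have hinj' : InjOn γ' I := by
    intro u hu v hv huv
    exact hinj hu hv (by rw [hEq hu, hEq hv, huv])
  -- first coordinate derivative bound
  set i₀ : Fin n := ⟨0, hn⟩
  have hcoord : ∀ t ∈ I, ‖deriv (fun s => γ s i₀) t‖ ≤ ‖deriv γ' t‖ := by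
    intro t ht
    have hL : HasDerivAt (fun s => γ' s i₀) ((deriv γ' t) i₀) t := by
      have := ((EuclideanSpace.proj i₀ : EuclideanSpace ℂ (Fin n) →L[ℂ] ℂ).restrictScalars
        ℝ).hasFDerivAt.comp_hasDerivAt t (hd' t ht)
      exact this
    have hev' : (fun s => γ s i₀) =ᶠ[nhds t] (fun s => γ' s i₀) :=
      (hev t ht).symm.fun_comp (fun x : EuclideanSpace ℂ (Fin n) => x i₀)
    have : deriv (fun s => γ s i₀) t = (deriv γ' t) i₀ := by
      rw [Filter.EventuallyEq.deriv_eq hev']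
      exact hL.deriv
    rw [this]
    -- coordinate norm bound in EuclideanSpace
    have : ‖(deriv γ' t) i₀‖ ^ 2 ≤ ‖deriv γ' t‖ ^ 2 := by
      rw [EuclideanSpace.norm_eq, Real.sq_sqrt (by positivity)]
      exact Finset.single_le_sum (f := fun j => ‖(deriv γ' t) j‖ ^ 2)
        (fun j _ => by positivity) (Finset.mem_univ i₀)
    nlinarith [norm_nonneg ((deriv γ' t) i₀), norm_nonneg (deriv γ' t)]
  -- weight
  set w : ℝ → ℝ≥0∞ := fun t => ENNReal.ofReal ‖deriv γ' t‖ with hw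
  have hwm : Measurable w := ENNReal.measurable_ofReal.comp hgm.norm
  set f : EuclideanSpace ℂ (Fin n) → ℝ≥0∞ := fun x => ENNReal.ofReal |θ x| with hfdef
  have hfm : Measurable f := ENNReal.measurable_ofReal.comp hθ.abs
  set μ : Measure ℝ := (volume.restrict I).withDensity w with hμ
  -- step 1 : LHS ≤ ∫⁻ in I, f (γ' t) * w t
  have step1 : ∫⁻ t in I, ENNReal.ofReal (|θ (γ t)| * ‖deriv (fun s => γ s i₀) t‖) ≤
      ∫⁻ t in I, f (γ' t) * w t := by
    apply lintegral_mono_ae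
    filter_upwards [ae_restrict_mem hIm] with t ht
    rw [ENNReal.ofReal_mul (abs_nonneg _), hfdef]
    have : θ (γ t) = θ (γ' t) := by rw [hEq ht]
    rw [this]
    exact mul_le_mul' le_rfl (ENNReal.ofReal_le_ofReal (hcoord t ht))
  -- step 2 : equals lintegral over the mapped measure
  have step2 : ∫⁻ t in I, f (γ' t) * w t = ∫⁻ x, f x ∂(Measure.map γ' μ) := by
    calc ∫⁻ t in I, f (γ' t) * w t
        = ∫⁻ t, (w * (f ∘ γ')) t ∂(volume.restrict I) := by
          congr 1; ext t; simp [mul_comm, Function.comp]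
      _ = ∫⁻ t, (f ∘ γ') t ∂μ :=
          (lintegral_withDensity_eq_lintegral_mul _ hwm (hfm.comp hγ'm)).symm
      _ = ∫⁻ x, f x ∂(Measure.map γ' μ) := (lintegral_map hfm hγ'm).symm
  -- step 3 : measure inequality
  have step3 : Measure.map γ' μ ≤ μH[1].restrict (γ' '' I) := by
    rw [Measure.le_iff]
    intro A hA
    rw [Measure.map_apply hγ'm hA, Measure.restrict_apply hA, hμ,
      withDensity_apply _ (hγ'm hA), Measure.restrict_restrict (hγ'm hA)]
    have hcore := core_lemma γ' (deriv γ') hinj' hd' hgcont hgm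
      ((hγ'm hA).inter hIm) inter_subset_right
    refine hcore.trans (measure_mono ?_)
    rintro x ⟨u, ⟨huA, huI⟩, rfl⟩
    exact ⟨huA, Set.mem_image_of_mem _ huI⟩
  have step4 : ∫⁻ x, f x ∂(Measure.map γ' μ) ≤
      ∫⁻ x in γ' '' I, f x ∂μH[1] := lintegral_mono' step3 le_rfl
  have himeq : γ' '' I = γ '' I := (Set.image_congr fun t ht => (hEq ht).symm)
  calc ∫⁻ t in I, ENNReal.ofReal (|θ (γ t)| * ‖deriv (fun s => γ s i₀) t‖)
      ≤ ∫⁻ t in I, f (γ' t) * w t := step1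
    _ = ∫⁻ x, f x ∂(Measure.map γ' μ) := step2
    _ ≤ ∫⁻ x in γ' '' I, f x ∂μH[1] := step4
    _ = ∫⁻ x in γ '' I, ENNReal.ofReal |θ x| ∂μH[1] := by rw [himeq]
end

section
/- Let N, k be natural numbers, let μ be a locally finite Borel measure on ℝ^N, and let c > 0. Let A = {a ∈ ℝ^N | limsup_{r → 0⁺} μ(closedBall(a, r)) / r^k ≥ c}, where the limsup is taken along the filter of positive radii tending to 0. Then for every compact set K ⊆ ℝ^N, μH^k(A ∩ K) < ∞; that is, the set of points of positive k-dimensional upper density at level c has locally finite k-dimensional Hausdorff measure. -/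
open MeasureTheory Set Filter
open scoped ENNReal Topology

/-- Points of positive `k`-dimensional upper density (at a fixed level `c > 0`)
of a locally finite Borel measure form a set of locally finite `k`-dimensional
Hausdorff measure. -/
theorem upper_density_set_locally_finite_hausdorff (N k : ℕ)
    (μ : Measure (EuclideanSpace ℝ (Fin N))) [IsLocallyFiniteMeasure μ]
    (c : ℝ) (hc : 0 < c)
    (A : Set (EuclideanSpace ℝ (Fin N)))
    (hA : A = {a | ENNReal.ofReal c ≤ limsup
        (fun r : ℝ => μ (Metric.closedBall a r) / ENNReal.ofReal (r ^ k))
        (𝓝[>] (0 : ℝ))})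
    (K : Set (EuclideanSpace ℝ (Fin N))) (hK : IsCompact K) :
    μH[(k : ℝ)] (A ∩ K) < ∞ := by
  set c2 : ℝ≥0∞ := ENNReal.ofReal (c / 2) with hc2def
  have hc2pos : 0 < c2 := ENNReal.ofReal_pos.2 (by linarith)
  have hc2ne : c2 ≠ 0 := hc2pos.ne'
  have hc2top : c2 ≠ ∞ := ENNReal.ofReal_ne_top
  set K' := Metric.cthickening 1 K with hK'def
  have hK'top : μ K' ≠ ∞ := (IsCompact.measure_lt_top (μ := μ) (hK.cthickening (r := 1))).ne
  -- main covering claim at scale ε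
  have key : ∀ ε : ℝ, 0 < ε → ε ≤ 1 → ∃ u : Set (EuclideanSpace ℝ (Fin N) × ℝ),
      u.Countable ∧
      (∀ p ∈ u, p.1 ∈ K ∧ 0 < p.2 ∧ p.2 ≤ ε ∧
        c2 * ENNReal.ofReal (p.2 ^ k) ≤ μ (Metric.closedBall p.1 p.2)) ∧
      (u.PairwiseDisjoint fun p => Metric.closedBall p.1 p.2) ∧
      A ∩ K ⊆ ⋃ p ∈ u, Metric.closedBall p.1 (4 * p.2) := by
    intro ε hε hε1
    set t : Set (EuclideanSpace ℝ (Fin N) × ℝ) := {p | p.1 ∈ A ∩ K ∧ 0 < p.2 ∧ p.2 ≤ ε ∧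
        c2 * ENNReal.ofReal (p.2 ^ k) ≤ μ (Metric.closedBall p.1 p.2)} with ht
    obtain ⟨u, hut, hdisj, hcov⟩ :=
      Vitali.exists_disjoint_subfamily_covering_enlargement_closedBall t Prod.fst Prod.snd ε
        (fun p hp => hp.2.2.1) 4 (by norm_num)
    have hu_prop : ∀ p ∈ u, p.1 ∈ K ∧ 0 < p.2 ∧ p.2 ≤ ε ∧
        c2 * ENNReal.ofReal (p.2 ^ k) ≤ μ (Metric.closedBall p.1 p.2) := by
      intro p hp
      exact ⟨(hut hp).1.2, (hut hp).2⟩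
    refine ⟨u, ?_, hu_prop, hdisj, ?_⟩
    · -- countability
      have hcnt : Set.Countable {q : ↥u | 0 < μ (Metric.closedBall (q : EuclideanSpace ℝ (Fin N) × ℝ).1 (q : EuclideanSpace ℝ (Fin N) × ℝ).2)} := by
        apply Measure.countable_meas_pos_of_disjoint_of_meas_iUnion_ne_top μ
          (fun _ => measurableSet_closedBall)
        · intro q q' hqq'
          exact hdisj q.2 q'.2 (fun h => hqq' (Subtype.ext h))
        · refine ne_top_of_le_ne_top hK'top (measure_mono ?_)
          refine iUnion_subset fun q => ?_
          obtain ⟨hqK, hq0, hqε, -⟩ := hu_prop _ q.2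
          calc Metric.closedBall (q : EuclideanSpace ℝ (Fin N) × ℝ).1 (q : EuclideanSpace ℝ (Fin N) × ℝ).2
              ⊆ Metric.cthickening (q : EuclideanSpace ℝ (Fin N) × ℝ).2 K := Metric.closedBall_subset_cthickening hqK _
            _ ⊆ K' := Metric.cthickening_mono (by linarith) K
      have huniv : {q : ↥u | 0 < μ (Metric.closedBall (q : EuclideanSpace ℝ (Fin N) × ℝ).1 (q : EuclideanSpace ℝ (Fin N) × ℝ).2)} = univ := by
        refine eq_univ_of_forall fun q => ?_
        obtain ⟨-, hq0, -, hμ⟩ := hu_prop _ q.2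
        have : (0 : ℝ≥0∞) < c2 * ENNReal.ofReal ((q : EuclideanSpace ℝ (Fin N) × ℝ).2 ^ k) := by
          exact ENNReal.mul_pos hc2ne (ENNReal.ofReal_pos.2 (pow_pos hq0 k)).ne'
        exact lt_of_lt_of_le this hμ
      rw [huniv] at hcnt
      exact Set.countable_coe_iff.mp (Set.countable_univ_iff.mp hcnt)
    · -- covering
      intro a ha
      have haA : ENNReal.ofReal c ≤ limsup
          (fun r : ℝ => μ (Metric.closedBall a r) / ENNReal.ofReal (r ^ k)) (𝓝[>] (0 : ℝ)) := by
        have := ha.1; rw [hA] at this; exact this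
      have hlt : c2 < limsup
          (fun r : ℝ => μ (Metric.closedBall a r) / ENNReal.ofReal (r ^ k)) (𝓝[>] (0 : ℝ)) :=
        lt_of_lt_of_le ((ENNReal.ofReal_lt_ofReal_iff hc).2 (by linarith)) haA
      have hfreq : ∃ᶠ r in 𝓝[>] (0 : ℝ),
          c2 < μ (Metric.closedBall a r) / ENNReal.ofReal (r ^ k) :=
        frequently_lt_of_lt_limsup (by isBoundedDefault) hlt
      have hev : ∀ᶠ r in 𝓝[>] (0 : ℝ), r ∈ Ioo (0 : ℝ) ε :=
        Ioo_mem_nhdsGT_of_mem ⟨le_refl 0, hε⟩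
      obtain ⟨r, hr1, hr2⟩ := (hfreq.and_eventually hev).exists
      have hr0 : 0 < r := hr2.1
      have hrk0 : ENNReal.ofReal (r ^ k) ≠ 0 := (ENNReal.ofReal_pos.2 (pow_pos hr0 k)).ne'
      have hμr : c2 * ENNReal.ofReal (r ^ k) ≤ μ (Metric.closedBall a r) := by
        have h := mul_le_mul_left hr1.le (ENNReal.ofReal (r ^ k))
        rwa [ENNReal.div_mul_cancel hrk0 ENNReal.ofReal_ne_top] at h
      have hat : (⟨a, r⟩ : EuclideanSpace ℝ (Fin N) × ℝ) ∈ t := ⟨ha, hr0, hr2.2.le, hμr⟩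
      obtain ⟨b, hbu, hsub⟩ := hcov _ hat
      refine mem_iUnion₂.2 ⟨b, hbu, hsub (Metric.mem_closedBall_self hr0.le)⟩
  -- choose coverings at scale 1/(n+1)
  have hscale : ∀ n : ℕ, (0 : ℝ) < 1 / (n + 1) ∧ (1 : ℝ) / (n + 1) ≤ 1 := by
    intro n
    constructor
    · positivity
    · rw [div_le_one (by positivity)]; linarith [Nat.cast_nonneg (α := ℝ) n]
  choose u hu_cnt hu_prop hu_disj hu_cov using fun n : ℕ =>
    key (1 / (n + 1)) (hscale n).1 (hscale n).2
  haveI : ∀ n, Countable ↥(u n) := fun n => (hu_cnt n).to_subtype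
  set C : ℝ≥0∞ := ENNReal.ofReal ((8 : ℝ) ^ k) * (μ K' / c2) with hCdef
  have hCtop : C < ∞ := by
    apply ENNReal.mul_lt_top ENNReal.ofReal_lt_top
    exact ENNReal.div_lt_top hK'top hc2ne
  have hle : μH[(k : ℝ)] (A ∩ K) ≤ C := by
    have main := MeasureTheory.Measure.hausdorffMeasure_le_liminf_tsum (k : ℝ) (A ∩ K)
      (l := atTop) (fun n : ℕ => ENNReal.ofReal (8 / (n + 1)))
      ?_ (fun n (i : ↥(u n)) => Metric.closedBall (i : EuclideanSpace ℝ (Fin N) × ℝ).1 (4 * (i : EuclideanSpace ℝ (Fin N) × ℝ).2)) ?_ ?_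
    · refine main.trans (liminf_le_of_frequently_le' (Frequently.of_forall fun n => ?_))
      -- bound each sum by C
      have hsum1 : ∀ i : ↥(u n),
          EMetric.diam (Metric.closedBall (i : EuclideanSpace ℝ (Fin N) × ℝ).1 (4 * (i : EuclideanSpace ℝ (Fin N) × ℝ).2)) ^ (k : ℝ)
            ≤ ENNReal.ofReal ((8 : ℝ) ^ k) * ENNReal.ofReal ((i : EuclideanSpace ℝ (Fin N) × ℝ).2 ^ k) := by
        intro i
        obtain ⟨-, hi0, -, -⟩ := hu_prop n _ i.2
        have hdiam : EMetric.diam (Metric.closedBall (i : EuclideanSpace ℝ (Fin N) × ℝ).1 (4 * (i : EuclideanSpace ℝ (Fin N) × ℝ).2))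
            ≤ ENNReal.ofReal (8 * (i : EuclideanSpace ℝ (Fin N) × ℝ).2) := by
          refine EMetric.diam_le fun x hx y hy => ?_
          rw [edist_dist]
          refine ENNReal.ofReal_le_ofReal ?_
          have := Metric.mem_closedBall.1 hx
          have := Metric.mem_closedBall.1 hy
          have := dist_triangle_right x y (i : EuclideanSpace ℝ (Fin N) × ℝ).1
          linarith
        calc EMetric.diam (Metric.closedBall (i : EuclideanSpace ℝ (Fin N) × ℝ).1 (4 * (i : EuclideanSpace ℝ (Fin N) × ℝ).2)) ^ (k : ℝ)
            ≤ ENNReal.ofReal (8 * (i : EuclideanSpace ℝ (Fin N) × ℝ).2) ^ (k : ℝ) :=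
              ENNReal.rpow_le_rpow hdiam (Nat.cast_nonneg k)
          _ = ENNReal.ofReal ((8 * (i : EuclideanSpace ℝ (Fin N) × ℝ).2) ^ k) := by
              rw [ENNReal.rpow_natCast, ← ENNReal.ofReal_pow (by linarith)]
          _ = ENNReal.ofReal ((8 : ℝ) ^ k) * ENNReal.ofReal ((i : EuclideanSpace ℝ (Fin N) × ℝ).2 ^ k) := by
              rw [mul_pow, ENNReal.ofReal_mul (by positivity)]
      have hsum2 : c2 * ∑' i : ↥(u n), ENNReal.ofReal ((i : EuclideanSpace ℝ (Fin N) × ℝ).2 ^ k) ≤ μ K' := by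
        rw [← ENNReal.tsum_mul_left]
        have hdis : Pairwise fun i j : ↥(u n) =>
            Disjoint (Metric.closedBall (i : EuclideanSpace ℝ (Fin N) × ℝ).1 (i : EuclideanSpace ℝ (Fin N) × ℝ).2)
              (Metric.closedBall (j : EuclideanSpace ℝ (Fin N) × ℝ).1 (j : EuclideanSpace ℝ (Fin N) × ℝ).2) := by
          intro i j hij
          exact hu_disj n i.2 j.2 (fun h => hij (Subtype.ext h))
        calc ∑' i : ↥(u n), c2 * ENNReal.ofReal ((i : EuclideanSpace ℝ (Fin N) × ℝ).2 ^ k)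
            ≤ ∑' i : ↥(u n), μ (Metric.closedBall (i : EuclideanSpace ℝ (Fin N) × ℝ).1 (i : EuclideanSpace ℝ (Fin N) × ℝ).2) :=
              ENNReal.tsum_le_tsum fun i => (hu_prop n _ i.2).2.2.2
          _ = μ (⋃ i : ↥(u n), Metric.closedBall (i : EuclideanSpace ℝ (Fin N) × ℝ).1 (i : EuclideanSpace ℝ (Fin N) × ℝ).2) :=
              (measure_iUnion hdis fun _ => measurableSet_closedBall).symm
          _ ≤ μ K' := by
              refine measure_mono (iUnion_subset fun i => ?_)
              obtain ⟨hiK, hi0, hiε, -⟩ := hu_prop n _ i.2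
              calc Metric.closedBall (i : EuclideanSpace ℝ (Fin N) × ℝ).1 (i : EuclideanSpace ℝ (Fin N) × ℝ).2
                  ⊆ Metric.cthickening (i : EuclideanSpace ℝ (Fin N) × ℝ).2 K :=
                    Metric.closedBall_subset_cthickening hiK _
                _ ⊆ K' := Metric.cthickening_mono (hiε.trans (hscale n).2) K
      calc ∑' i : ↥(u n),
            EMetric.diam (Metric.closedBall (i : EuclideanSpace ℝ (Fin N) × ℝ).1 (4 * (i : EuclideanSpace ℝ (Fin N) × ℝ).2)) ^ (k : ℝ)
          ≤ ∑' i : ↥(u n), ENNReal.ofReal ((8 : ℝ) ^ k) * ENNReal.ofReal ((i : EuclideanSpace ℝ (Fin N) × ℝ).2 ^ k) :=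
            ENNReal.tsum_le_tsum hsum1
        _ = ENNReal.ofReal ((8 : ℝ) ^ k) * ∑' i : ↥(u n), ENNReal.ofReal ((i : EuclideanSpace ℝ (Fin N) × ℝ).2 ^ k) :=
            ENNReal.tsum_mul_left
        _ ≤ ENNReal.ofReal ((8 : ℝ) ^ k) * (μ K' / c2) := by
            gcongr
            rw [ENNReal.le_div_iff_mul_le (Or.inl hc2ne) (Or.inl hc2top), mul_comm]
            exact hsum2
        _ = C := rfl
    · -- tendsto 0
      rw [show (0 : ℝ≥0∞) = ENNReal.ofReal 0 by simp]
      apply ENNReal.tendsto_ofReal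
      have h8 : Tendsto (fun n : ℕ => 8 * (1 / ((n : ℝ) + 1))) atTop (𝓝 (8 * 0)) :=
        tendsto_const_nhds.mul tendsto_one_div_add_atTop_nhds_zero_nat
      simpa [mul_one_div, div_eq_mul_inv] using h8
    · -- diam bounds
      refine Eventually.of_forall fun n => fun i => ?_
      obtain ⟨-, hi0, hiε, -⟩ := hu_prop n _ i.2
      refine EMetric.diam_le fun x hx y hy => ?_
      rw [edist_dist]
      refine ENNReal.ofReal_le_ofReal ?_
      have hx' := Metric.mem_closedBall.1 hx
      have hy' := Metric.mem_closedBall.1 hy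
      have htr := dist_triangle_right x y (i : EuclideanSpace ℝ (Fin N) × ℝ).1
      have : dist x y ≤ 8 * (i : EuclideanSpace ℝ (Fin N) × ℝ).2 := by linarith
      have h2 : (8 : ℝ) * (i : EuclideanSpace ℝ (Fin N) × ℝ).2 ≤ 8 * (1 / (n + 1)) := by linarith
      calc dist x y ≤ 8 * (i : EuclideanSpace ℝ (Fin N) × ℝ).2 := this
        _ ≤ 8 / (n + 1) := by rw [mul_one_div] at h2; exact h2
    · -- covering
      refine Eventually.of_forall fun n => ?_
      intro a ha
      obtain ⟨p, hp, hap⟩ := mem_iUnion₂.1 (hu_cov n ha)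
      exact mem_iUnion.2 ⟨⟨p, hp⟩, hap⟩
  exact lt_of_le_of_lt hle hCtop
end
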